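/- Let X and Y be Banach spaces, δ > 0, and 1 < p ≤ ∞. If X ⊕_p Y is δ-average rough, then both X and Y are δ-average rough. -/

import Mathlib

open Filter Topology ENNReal

noncomputable section

/-- A Banach space `X` is `δ`-average rough if for every finite family of unit vectors
`x₁, …, xₙ`, one has `limsup_{‖y‖→0} (1/n) ∑ᵢ (‖xᵢ+y‖+‖xᵢ-y‖-2)/‖y‖ ≥ δ`. -/
def AverageRough (X : Type*) [NormedAddCommGroup X] [NormedSpace ℝ X] (δ : ℝ) : Prop :=
  ∀ n : ℕ, 0 < n → ∀ x : Fin n → X, (∀ i, ‖x i‖ = 1) →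
    δ ≤ Filter.limsup
      (fun y : X => (1 / (n : ℝ)) * ∑ i, (‖x i + y‖ + ‖x i - y‖ - 2) / ‖y‖) (𝓝[≠] 0)

/-! ### Auxiliary lemmas -/

section Aux

lemma AR.scalarA {q : ℝ} (hq : 1 < q) {ε : ℝ} (hε : 0 < ε) :
    ∃ η > (0:ℝ), ∀ B V : ℝ, 1/4 ≤ B → 0 ≤ V → V ≤ η →
      (B ^ q + V ^ q) ^ (1/q) ≤ B + ε * V := by
  have hq0 : (0:ℝ) < q := lt_trans one_pos hq
  have hq1 : (0:ℝ) < q - 1 := by linarith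
  set c : ℝ := ε * q * (1/4 : ℝ) ^ (q - 1) with hc
  have hc0 : 0 < c := by
    apply mul_pos (mul_pos hε hq0)
    exact Real.rpow_pos_of_pos (by norm_num) _
  refine ⟨c ^ (1/(q-1)), Real.rpow_pos_of_pos hc0 _, fun B V hB hV hVη => ?_⟩
  have hB0 : (0:ℝ) < B := lt_of_lt_of_le (by norm_num) hB
  have key : V ^ (q - 1) ≤ ε * q * B ^ (q - 1) := by
    calc V ^ (q-1) ≤ (c ^ (1/(q-1))) ^ (q-1) :=
          Real.rpow_le_rpow hV hVη (le_of_lt hq1)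
    _ = c := by
          rw [← Real.rpow_mul (le_of_lt hc0), one_div_mul_cancel (ne_of_gt hq1),
            Real.rpow_one]
    _ ≤ ε * q * B ^ (q-1) := by
          rw [hc]
          exact mul_le_mul_of_nonneg_left
            (Real.rpow_le_rpow (by norm_num) hB (le_of_lt hq1))
            (le_of_lt (mul_pos hε hq0))
  have main : B ^ q + V ^ q ≤ (B + ε * V) ^ q := by
    have hs : (0:ℝ) ≤ ε * V / B := by positivity
    have bern : 1 + q * (ε * V / B) ≤ (1 + ε * V / B) ^ q :=
      one_add_mul_self_le_rpow_one_add (by linarith) (le_of_lt hq)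
    have expand : (B + ε * V) ^ q = B ^ q * (1 + ε * V / B) ^ q := by
      rw [← Real.mul_rpow (le_of_lt hB0) (by linarith)]
      congr 1
      field_simp
    have hVq : V ^ q ≤ ε * q * B ^ (q-1) * V := by
      rcases eq_or_lt_of_le hV with rfl | hV0
      · rw [Real.zero_rpow (ne_of_gt hq0)]
        positivity
      · calc V ^ q = V ^ (q - 1) * V := by
              rw [← Real.rpow_add_one (ne_of_gt hV0)]; ring_nf
        _ ≤ ε * q * B ^ (q-1) * V := mul_le_mul_of_nonneg_right key hV
    have hB1 : B ^ (q-1) = B ^ q / B := by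
      rw [Real.rpow_sub hB0, Real.rpow_one]
    calc B ^ q + V ^ q ≤ B ^ q + ε * q * B ^ (q-1) * V := by linarith
    _ = B ^ q * (1 + q * (ε * V / B)) := by rw [hB1]; field_simp
    _ ≤ B ^ q * (1 + ε * V / B) ^ q :=
        mul_le_mul_of_nonneg_left bern (Real.rpow_nonneg (le_of_lt hB0) q)
    _ = (B + ε * V) ^ q := expand.symm
  calc (B ^ q + V ^ q) ^ (1/q) ≤ ((B + ε * V) ^ q) ^ (1/q) :=
        Real.rpow_le_rpow (by positivity) main (by positivity)
  _ = B + ε * V := by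
        rw [← Real.rpow_mul (by positivity), mul_one_div, div_self (ne_of_gt hq0),
          Real.rpow_one]

variable {X Y : Type*} [NormedAddCommGroup X] [NormedAddCommGroup Y]

lemma AR.prodnorm_add {p : ℝ≥0∞} [Fact (1 ≤ p)] (hq : 0 < p.toReal)
    (w : WithLp p (X × Y)) :
    ‖w‖ = (‖w.fst‖ ^ p.toReal + ‖w.snd‖ ^ p.toReal) ^ (1 / p.toReal) :=
  WithLp.prod_norm_eq_add hq w

lemma AR.prodnorm_sup (w : WithLp ∞ (X × Y)) : ‖w‖ = ‖w.fst‖ ⊔ ‖w.snd‖ :=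
  WithLp.prod_norm_eq_sup w

lemma AR.toReal_pos' {p : ℝ≥0∞} [Fact (1 ≤ p)] (hp' : p ≠ ∞) : 0 < p.toReal :=
  ENNReal.toReal_pos (by
    have := (Fact.out : 1 ≤ p); intro h0; rw [h0] at this; simp at this) hp'

lemma AR.coord_le (p : ℝ≥0∞) [Fact (1 ≤ p)] (w : WithLp p (X × Y)) :
    ‖w.fst‖ ≤ ‖w‖ ∧ ‖w.snd‖ ≤ ‖w‖ := by
  rcases eq_or_ne p ∞ with rfl | hp'
  · rw [AR.prodnorm_sup w]
    exact ⟨le_max_left _ _, le_max_right _ _⟩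
  · have hq := AR.toReal_pos' hp'
    rw [AR.prodnorm_add hq w]
    constructor
    · calc ‖w.fst‖ = (‖w.fst‖ ^ p.toReal) ^ (1/p.toReal) := by
            rw [← Real.rpow_mul (norm_nonneg _), mul_one_div, div_self (ne_of_gt hq),
              Real.rpow_one]
      _ ≤ _ := Real.rpow_le_rpow (by positivity)
            (by have : (0:ℝ) ≤ ‖w.snd‖ ^ p.toReal := by positivity
                linarith) (by positivity)
    · calc ‖w.snd‖ = (‖w.snd‖ ^ p.toReal) ^ (1/p.toReal) := by
            rw [← Real.rpow_mul (norm_nonneg _), mul_one_div, div_self (ne_of_gt hq),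
              Real.rpow_one]
      _ ≤ _ := Real.rpow_le_rpow (by positivity)
            (by have : (0:ℝ) ≤ ‖w.fst‖ ^ p.toReal := by positivity
                linarith) (by positivity)

lemma AR.norm_mk_left (p : ℝ≥0∞) [Fact (1 ≤ p)] (a : X) :
    ‖(WithLp.equiv p (X × Y)).symm (a, 0)‖ = ‖a‖ := by
  rcases eq_or_ne p ∞ with rfl | hp'
  · calc ‖(WithLp.equiv ∞ (X × Y)).symm (a, 0)‖ = ‖a‖ ⊔ ‖(0:Y)‖ := AR.prodnorm_sup _
    _ = ‖a‖ := by simp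
  · have hq := AR.toReal_pos' hp'
    calc ‖(WithLp.equiv p (X × Y)).symm (a, 0)‖
        = (‖a‖ ^ p.toReal + ‖(0:Y)‖ ^ p.toReal) ^ (1/p.toReal) := AR.prodnorm_add hq _
    _ = ‖a‖ := by
        rw [norm_zero, Real.zero_rpow (ne_of_gt hq), add_zero,
          ← Real.rpow_mul (norm_nonneg _), mul_one_div, div_self (ne_of_gt hq),
          Real.rpow_one]

lemma AR.norm_mk_right (p : ℝ≥0∞) [Fact (1 ≤ p)] (b : Y) :
    ‖(WithLp.equiv p (X × Y)).symm (0, b)‖ = ‖b‖ := by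
  rcases eq_or_ne p ∞ with rfl | hp'
  · calc ‖(WithLp.equiv ∞ (X × Y)).symm (0, b)‖ = ‖(0:X)‖ ⊔ ‖b‖ := AR.prodnorm_sup _
    _ = ‖b‖ := by simp
  · have hq := AR.toReal_pos' hp'
    calc ‖(WithLp.equiv p (X × Y)).symm (0, b)‖
        = (‖(0:X)‖ ^ p.toReal + ‖b‖ ^ p.toReal) ^ (1/p.toReal) := AR.prodnorm_add hq _
    _ = ‖b‖ := by
        rw [norm_zero, Real.zero_rpow (ne_of_gt hq), zero_add,
          ← Real.rpow_mul (norm_nonneg _), mul_one_div, div_self (ne_of_gt hq),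
          Real.rpow_one]

/-- The key smoothness estimate for the `ℓ^p`-norm, `p > 1`: if one coordinate is
bounded away from `0`, the norm is up to `ε` insensitive to the other coordinate. -/
lemma AR.norm_est {p : ℝ≥0∞} [Fact (1 ≤ p)] (hp : 1 < p) {ε : ℝ} (hε : 0 < ε) :
    ∃ η > (0:ℝ), ∀ w : WithLp p (X × Y), 1/4 ≤ ‖w.fst‖ → ‖w.snd‖ ≤ η →
      ‖w‖ ≤ ‖w.fst‖ + ε * ‖w.snd‖ := by
  rcases eq_or_ne p ∞ with rfl | hp'
  · refine ⟨1/4, by norm_num, fun w hB hV => ?_⟩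
    rw [AR.prodnorm_sup w, sup_eq_left.mpr (le_trans hV hB)]
    have : 0 ≤ ε * ‖w.snd‖ := by positivity
    linarith
  · have hq : 1 < p.toReal := by
      rw [← ENNReal.toReal_one]
      exact ENNReal.toReal_strict_mono hp' hp
    obtain ⟨η, hη, hkey⟩ := AR.scalarA hq hε
    refine ⟨η, hη, fun w hB hV => ?_⟩
    rw [AR.prodnorm_add (lt_trans one_pos hq) w]
    exact hkey ‖w.fst‖ ‖w.snd‖ hB (norm_nonneg _) hV

/-- Symmetric version of `AR.norm_est`. -/
lemma AR.norm_est' {p : ℝ≥0∞} [Fact (1 ≤ p)] (hp : 1 < p) {ε : ℝ} (hε : 0 < ε) :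
    ∃ η > (0:ℝ), ∀ w : WithLp p (X × Y), 1/4 ≤ ‖w.snd‖ → ‖w.fst‖ ≤ η →
      ‖w‖ ≤ ‖w.snd‖ + ε * ‖w.fst‖ := by
  rcases eq_or_ne p ∞ with rfl | hp'
  · refine ⟨1/4, by norm_num, fun w hB hV => ?_⟩
    rw [AR.prodnorm_sup w, sup_eq_right.mpr (le_trans hV hB)]
    have : 0 ≤ ε * ‖w.fst‖ := by positivity
    linarith
  · have hq : 1 < p.toReal := by
      rw [← ENNReal.toReal_one]
      exact ENNReal.toReal_strict_mono hp' hp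
    obtain ⟨η, hη, hkey⟩ := AR.scalarA hq hε
    refine ⟨η, hη, fun w hB hV => ?_⟩
    rw [AR.prodnorm_add (lt_trans one_pos hq) w, add_comm]
    exact hkey ‖w.snd‖ ‖w.fst‖ hB (norm_nonneg _) hV

/-- Pointwise bounds for a single term of the average-roughness expression. -/
lemma AR.num_nonneg {E : Type*} [NormedAddCommGroup E] [NormedSpace ℝ E] {x : E} (hx : ‖x‖ = 1) (y : E) :
    0 ≤ ‖x + y‖ + ‖x - y‖ - 2 := by
  have h1 : ‖x + x‖ = 2 := by
    rw [← two_smul ℝ x, norm_smul, hx]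
    simp
  have h2 : ‖x + x‖ ≤ ‖x + y‖ + ‖x - y‖ := by
    have : x + x = (x + y) + (x - y) := by abel
    rw [this]
    exact norm_add_le _ _
  linarith

lemma AR.avg_bounds {E : Type*} [NormedAddCommGroup E] [NormedSpace ℝ E] (n : ℕ) (hn : 0 < n)
    (x : Fin n → E) (hx : ∀ i, ‖x i‖ = 1) (y : E) :
    0 ≤ (1 / (n : ℝ)) * ∑ i, (‖x i + y‖ + ‖x i - y‖ - 2) / ‖y‖ ∧
      (1 / (n : ℝ)) * ∑ i, (‖x i + y‖ + ‖x i - y‖ - 2) / ‖y‖ ≤ 2 := by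
  have hterm : ∀ i, 0 ≤ (‖x i + y‖ + ‖x i - y‖ - 2) / ‖y‖ ∧
      (‖x i + y‖ + ‖x i - y‖ - 2) / ‖y‖ ≤ 2 := by
    intro i
    constructor
    · exact div_nonneg (AR.num_nonneg (hx i) y) (norm_nonneg _)
    · rcases eq_or_ne y 0 with rfl | hy
      · simp
      · have hy0 : 0 < ‖y‖ := norm_pos_iff.mpr hy
        rw [div_le_iff₀ hy0]
        have h1 : ‖x i + y‖ ≤ 1 + ‖y‖ := by
          calc ‖x i + y‖ ≤ ‖x i‖ + ‖y‖ := norm_add_le _ _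
          _ = 1 + ‖y‖ := by rw [hx i]
        have h2 : ‖x i - y‖ ≤ 1 + ‖y‖ := by
          calc ‖x i - y‖ ≤ ‖x i‖ + ‖y‖ := norm_sub_le _ _
          _ = 1 + ‖y‖ := by rw [hx i]
        linarith
  have hn0 : (0:ℝ) < (n:ℝ) := by exact_mod_cast hn
  constructor
  · apply mul_nonneg (by positivity)
    exact Finset.sum_nonneg fun i _ => (hterm i).1
  · have hsum : ∑ i, (‖x i + y‖ + ‖x i - y‖ - 2) / ‖y‖ ≤ (n : ℝ) * 2 := by
      calc ∑ i, (‖x i + y‖ + ‖x i - y‖ - 2) / ‖y‖ ≤ ∑ _i : Fin n, (2:ℝ) :=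
            Finset.sum_le_sum fun i _ => (hterm i).2
      _ = (n : ℝ) * 2 := by simp [Finset.sum_const, mul_comm]
    calc (1 / (n : ℝ)) * ∑ i, (‖x i + y‖ + ‖x i - y‖ - 2) / ‖y‖
        ≤ (1 / (n : ℝ)) * ((n:ℝ) * 2) := by
          apply mul_le_mul_of_nonneg_left hsum (by positivity)
    _ = 2 := by field_simp

/-- Abstract transfer lemma: if `X` embeds isometrically into `W` with a norm-one
projection back, and adding small vectors of `W` increases the norm of (perturbed)
unit vectors of `X` by at most `ε ‖w‖` more than their projections do, then
average roughness of `W` passes to `X`. -/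
lemma AR.transfer {X W : Type*} [NormedAddCommGroup X] [NormedSpace ℝ X]
    [NormedAddCommGroup W] [NormedSpace ℝ W]
    (ι : X →ₗᵢ[ℝ] W) (π : W →L[ℝ] X)
    (hπ : ∀ w, ‖π w‖ ≤ ‖w‖)
    (hkey : ∀ ε : ℝ, 0 < ε → ∃ η > (0:ℝ), ∀ w : W, ‖w‖ ≤ η → ∀ a : X, ‖a‖ = 1 →
      ‖ι a + w‖ ≤ ‖a + π w‖ + ε * ‖w‖)
    (δ : ℝ) (h : AverageRough W δ) : AverageRough X δ := by
  intro n hn x hx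
  haveI : Nontrivial X := by
    refine ⟨x ⟨0, hn⟩, 0, fun h0 => ?_⟩
    have := hx ⟨0, hn⟩
    rw [h0, norm_zero] at this
    norm_num at this
  haveI : Nontrivial W := by
    refine ⟨ι (x ⟨0, hn⟩), 0, fun h0 => ?_⟩
    have h1 : ‖ι (x ⟨0, hn⟩)‖ = 1 := by rw [ι.norm_map]; exact hx _
    rw [h0, norm_zero] at h1
    norm_num at h1
  set G : X → ℝ := fun y => (1 / (n : ℝ)) * ∑ i, (‖x i + y‖ + ‖x i - y‖ - 2) / ‖y‖
    with hGdef
  show δ ≤ limsup G (𝓝[≠] (0:X))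
  have hG0 : ∀ y, 0 ≤ G y := fun y => (AR.avg_bounds n hn x hx y).1
  have hG2 : ∀ y, G y ≤ 2 := fun y => (AR.avg_bounds n hn x hx y).2
  set z : Fin n → W := fun i => ι (x i) with hzdef
  have hz : ∀ i, ‖z i‖ = 1 := fun i => by rw [hzdef]; rw [ι.norm_map]; exact hx i
  set F : W → ℝ := fun w => (1 / (n : ℝ)) * ∑ i, (‖z i + w‖ + ‖z i - w‖ - 2) / ‖w‖
    with hFdef
  have hF0 : ∀ w, 0 ≤ F w := fun w => (AR.avg_bounds n hn z hz w).1
  have hW : δ ≤ limsup F (𝓝[≠] (0:W)) := h n hn z hz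
  -- limsup over full neighbourhoods is controlled by limsup over punctured ones
  have hnhds : limsup G (𝓝 (0:X)) ≤ limsup G (𝓝[≠] (0:X)) := by
    by_contra hcon
    push_neg at hcon
    obtain ⟨c, hc1, hc2⟩ := exists_between hcon
    have h1 : ∀ᶠ y in 𝓝[≠] (0:X), G y < c :=
      eventually_lt_of_limsup_lt hc1 (isBoundedUnder_of ⟨2, hG2⟩)
    have hL0 : (0:ℝ) ≤ limsup G (𝓝[≠] (0:X)) :=
      le_limsup_of_frequently_le (Frequently.of_forall fun y => hG0 y)
        (isBoundedUnder_of ⟨2, hG2⟩)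
    have h2 : ∀ᶠ y in pure (0:X), G y < c := by
      rw [eventually_pure]
      have : G 0 = 0 := by
        rw [hGdef]
        simp
      rw [this]
      linarith
    have h3 : ∀ᶠ y in 𝓝 (0:X), G y ≤ c := by
      rw [← nhdsNE_sup_pure (0:X)]
      exact (eventually_sup.mpr ⟨h1, h2⟩).mono fun y hy => le_of_lt hy
    have h4 : limsup G (𝓝 (0:X)) ≤ c :=
      limsup_le_of_le (isCoboundedUnder_le_of_le _ fun y => hG0 y) h3
    linarith
  refine le_of_forall_pos_le_add fun ε hε => ?_
  obtain ⟨η, hη, hkey'⟩ := hkey (ε/4) (by positivity)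
  -- the eventual pointwise estimate
  have hev : ∀ᶠ w in 𝓝[≠] (0:W), F w ≤ G (π w) + ε/2 := by
    have hball : ∀ᶠ w in 𝓝 (0:W), ‖w‖ ≤ η := by
      have := Metric.closedBall_mem_nhds (0:W) hη
      filter_upwards [this] with w hw
      simpa [Metric.mem_closedBall, dist_zero_right] using hw
    have hne : ∀ᶠ w in 𝓝[≠] (0:W), w ≠ 0 := eventually_mem_nhdsWithin
    filter_upwards [hball.filter_mono nhdsWithin_le_nhds, hne] with w hwη hw0
    have hwpos : 0 < ‖w‖ := norm_pos_iff.mpr hw0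
    have hterm : ∀ i, (‖z i + w‖ + ‖z i - w‖ - 2) / ‖w‖ ≤
        (‖x i + π w‖ + ‖x i - π w‖ - 2) / ‖π w‖ + ε/2 := by
      intro i
      have e1 : ‖z i + w‖ ≤ ‖x i + π w‖ + (ε/4) * ‖w‖ := hkey' w hwη (x i) (hx i)
      have e2 : ‖z i - w‖ ≤ ‖x i - π w‖ + (ε/4) * ‖w‖ := by
        have h5 := hkey' w hwη (-(x i)) (by rw [norm_neg]; exact hx i)
        have h6 : ‖ι (-(x i)) + w‖ = ‖z i - w‖ := by
          rw [ι.map_neg, hzdef]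
          rw [show -ι (x i) + w = -(ι (x i) - w) by abel, norm_neg]
        have h7 : ‖-(x i) + π w‖ = ‖x i - π w‖ := by
          rw [show -(x i) + π w = -(x i - π w) by abel, norm_neg]
        rw [h6, h7] at h5
        exact h5
      have step1 : (‖z i + w‖ + ‖z i - w‖ - 2) / ‖w‖ ≤
          (‖x i + π w‖ + ‖x i - π w‖ - 2) / ‖w‖ + ε/2 := by
        have : (‖z i + w‖ + ‖z i - w‖ - 2) ≤
            (‖x i + π w‖ + ‖x i - π w‖ - 2) + (ε/2) * ‖w‖ := by linarith
        calc (‖z i + w‖ + ‖z i - w‖ - 2) / ‖w‖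
            ≤ ((‖x i + π w‖ + ‖x i - π w‖ - 2) + (ε/2) * ‖w‖) / ‖w‖ :=
              (div_le_div_iff_of_pos_right hwpos).mpr this
        _ = (‖x i + π w‖ + ‖x i - π w‖ - 2) / ‖w‖ + ε/2 := by
              rw [add_div, mul_div_assoc, div_self (ne_of_gt hwpos), mul_one]
      have step2 : (‖x i + π w‖ + ‖x i - π w‖ - 2) / ‖w‖ ≤
          (‖x i + π w‖ + ‖x i - π w‖ - 2) / ‖π w‖ := by
        rcases eq_or_ne (π w) 0 with hπ0 | hπ0
        · rw [hπ0]
          simp only [add_zero, sub_zero, hx i, norm_zero, _root_.div_zero]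
          norm_num
        · exact div_le_div_of_nonneg_left (AR.num_nonneg (hx i) (π w))
            (norm_pos_iff.mpr hπ0) (hπ w)
      linarith
    have hsum : F w ≤ (1 / (n : ℝ)) *
        ∑ i, ((‖x i + π w‖ + ‖x i - π w‖ - 2) / ‖π w‖ + ε/2) := by
      rw [hFdef]
      apply mul_le_mul_of_nonneg_left (Finset.sum_le_sum fun i _ => hterm i)
        (by positivity)
    have hval : (1 / (n : ℝ)) *
        ∑ i, ((‖x i + π w‖ + ‖x i - π w‖ - 2) / ‖π w‖ + ε/2) = G (π w) + ε/2 := by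
      rw [Finset.sum_add_distrib, Finset.sum_const, Finset.card_univ, Fintype.card_fin,
        mul_add, hGdef]
      have hn0 : ((n:ℝ)) ≠ 0 := by
        have : (0:ℝ) < (n:ℝ) := by exact_mod_cast hn
        exact ne_of_gt this
      congr 1
      rw [nsmul_eq_mul]
      field_simp
    rw [hval] at hsum
    exact hsum
  -- pass to limsups
  have hb1 : IsBoundedUnder (· ≤ ·) (𝓝[≠] (0:W)) (fun w => G (π w) + ε/2) :=
    isBoundedUnder_of ⟨2 + ε/2, fun w => by linarith [hG2 (π w)]⟩
  have hcb1 : IsCoboundedUnder (· ≤ ·) (𝓝[≠] (0:W)) F :=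
    isCoboundedUnder_le_of_le _ fun w => hF0 w
  have step1 : limsup F (𝓝[≠] (0:W)) ≤
      limsup (fun w => G (π w) + ε/2) (𝓝[≠] (0:W)) :=
    limsup_le_limsup hev hcb1 hb1
  have step2 : limsup (fun w => G (π w) + ε/2) (𝓝[≠] (0:W)) =
      limsup (fun w => G (π w)) (𝓝[≠] (0:W)) + ε/2 :=
    limsup_add_const _ _ _ (isBoundedUnder_of ⟨2, fun w => hG2 (π w)⟩)
      (isCoboundedUnder_le_of_le _ fun w => hG0 (π w))
  have hmaple : (𝓝[≠] (0:W)).map π ≤ 𝓝 (0:X) := by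
    refine le_trans (map_mono nhdsWithin_le_nhds) ?_
    have := π.continuous.tendsto (0:W)
    rwa [map_zero] at this
  have step3 : limsup (fun w => G (π w)) (𝓝[≠] (0:W)) ≤ limsup G (𝓝 (0:X)) := by
    have heq : limsup (fun w => G (π w)) (𝓝[≠] (0:W)) =
        limsup G ((𝓝[≠] (0:W)).map π) := limsup_comp G π _
    rw [heq]
    exact limsup_le_limsup_of_le hmaple
      (isCoboundedUnder_le_of_le _ fun y => hG0 y)
      (isBoundedUnder_of ⟨2, fun y => hG2 y⟩)
  calc δ ≤ limsup F (𝓝[≠] (0:W)) := hW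
  _ ≤ limsup (fun w => G (π w)) (𝓝[≠] (0:W)) + ε/2 := by rw [← step2]; exact step1
  _ ≤ limsup G (𝓝 (0:X)) + ε/2 := by linarith
  _ ≤ limsup G (𝓝[≠] (0:X)) + ε := by linarith

end Aux

/-- If `X ⊕_p Y` is `δ`-average rough for some `1 < p ≤ ∞`, then both `X` and `Y` are
`δ`-average rough. -/
theorem averageRough_of_prod_lp (X Y : Type*)
    [NormedAddCommGroup X] [NormedSpace ℝ X] [CompleteSpace X]
    [NormedAddCommGroup Y] [NormedSpace ℝ Y] [CompleteSpace Y]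
    (p : ℝ≥0∞) [Fact (1 ≤ p)] (hp : 1 < p)
    (δ : ℝ) (hδ : 0 < δ) (h : AverageRough (WithLp p (X × Y)) δ) :
    AverageRough X δ ∧ AverageRough Y δ := by
  constructor
  · -- X is δ-average rough
    set ι : X →ₗᵢ[ℝ] WithLp p (X × Y) :=
      ⟨(WithLp.linearEquiv p ℝ (X × Y)).symm.toLinearMap.comp (LinearMap.inl ℝ X Y),
        fun a => AR.norm_mk_left p a⟩ with hιdef
    set π : WithLp p (X × Y) →L[ℝ] X :=
      LinearMap.mkContinuous
        ((LinearMap.fst ℝ X Y).comp (WithLp.linearEquiv p ℝ (X × Y)).toLinearMap)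
        1 (fun w => by simpa using (AR.coord_le p w).1) with hπdef
    refine AR.transfer ι π (fun w => (AR.coord_le p w).1) ?_ δ h
    intro ε hε
    obtain ⟨η, hη, hest⟩ := AR.norm_est (X := X) (Y := Y) hp hε
    refine ⟨min η (1/4), lt_min hη (by norm_num), fun w hw a ha => ?_⟩
    have hfst : ‖w.fst‖ ≤ ‖w‖ := (AR.coord_le p w).1
    have hsnd : ‖w.snd‖ ≤ ‖w‖ := (AR.coord_le p w).2
    have hB : 1/4 ≤ ‖a + w.fst‖ := by
      have h1 : ‖a‖ - ‖-(w.fst)‖ ≤ ‖a - -(w.fst)‖ := norm_sub_norm_le a (-(w.fst))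
      rw [norm_neg, sub_neg_eq_add, ha] at h1
      have h2 : ‖w.fst‖ ≤ 1/4 := le_trans hfst (le_trans hw (min_le_right _ _))
      linarith
    have hV : ‖w.snd‖ ≤ η := le_trans hsnd (le_trans hw (min_le_left _ _))
    have hco1 : (ι a + w).fst = a + w.fst := rfl
    have hco2 : (ι a + w).snd = w.snd := by
      have : (ι a + w).snd = (0:Y) + w.snd := rfl
      rw [this, zero_add]
    have hmain := hest (ι a + w) (by rw [hco1]; exact hB) (by rw [hco2]; exact hV)
    rw [hco1, hco2] at hmain
    have hfin : ‖a + w.fst‖ + ε * ‖w.snd‖ ≤ ‖a + w.fst‖ + ε * ‖w‖ := by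
      have := mul_le_mul_of_nonneg_left hsnd (le_of_lt hε)
      linarith
    exact le_trans hmain hfin
  · -- Y is δ-average rough
    set ι : Y →ₗᵢ[ℝ] WithLp p (X × Y) :=
      ⟨(WithLp.linearEquiv p ℝ (X × Y)).symm.toLinearMap.comp (LinearMap.inr ℝ X Y),
        fun b => AR.norm_mk_right p b⟩ with hιdef
    set π : WithLp p (X × Y) →L[ℝ] Y :=
      LinearMap.mkContinuous
        ((LinearMap.snd ℝ X Y).comp (WithLp.linearEquiv p ℝ (X × Y)).toLinearMap)
        1 (fun w => by simpa using (AR.coord_le p w).2) with hπdef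
    refine AR.transfer ι π (fun w => (AR.coord_le p w).2) ?_ δ h
    intro ε hε
    obtain ⟨η, hη, hest⟩ := AR.norm_est' (X := X) (Y := Y) hp hε
    refine ⟨min η (1/4), lt_min hη (by norm_num), fun w hw b hb => ?_⟩
    have hfst : ‖w.fst‖ ≤ ‖w‖ := (AR.coord_le p w).1
    have hsnd : ‖w.snd‖ ≤ ‖w‖ := (AR.coord_le p w).2
    have hB : 1/4 ≤ ‖b + w.snd‖ := by
      have h1 : ‖b‖ - ‖-(w.snd)‖ ≤ ‖b - -(w.snd)‖ := norm_sub_norm_le b (-(w.snd))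
      rw [norm_neg, sub_neg_eq_add, hb] at h1
      have h2 : ‖w.snd‖ ≤ 1/4 := le_trans hsnd (le_trans hw (min_le_right _ _))
      linarith
    have hV : ‖w.fst‖ ≤ η := le_trans hfst (le_trans hw (min_le_left _ _))
    have hco1 : (ι b + w).fst = w.fst := by
      have : (ι b + w).fst = (0:X) + w.fst := rfl
      rw [this, zero_add]
    have hco2 : (ι b + w).snd = b + w.snd := rfl
    have hmain := hest (ι b + w) (by rw [hco2]; exact hB) (by rw [hco1]; exact hV)
    rw [hco1, hco2] at hmain
    have hfin : ‖b + w.snd‖ + ε * ‖w.fst‖ ≤ ‖b + w.snd‖ + ε * ‖w‖ := by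
      have := mul_le_mul_of_nonneg_left hfst (le_of_lt hε)
      linarith
    exact le_trans hmain hfin
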